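/- For any l ≥ 1: χ_ℓ(C_{2l+1} □ K_{1,s}) = 3 if s < 2^{2l+1} − 2, and χ_ℓ(C_{2l+1} □ K_{1,s}) = 4 if s ≥ 2^{2l+1} − 2. -/

import Mathlib

open SimpleGraph Finset

section ListColoringDefs

variable {V : Type*}

/-- `f` is a proper coloring of `G` choosing each color from the list `L v`. -/
def IsProperListColoring (G : SimpleGraph V) (L : V → Finset ℕ) (f : V → ℕ) : Prop :=
  (∀ v, f v ∈ L v) ∧ ∀ u v, G.Adj u v → f u ≠ f v

/-- `G` admits a proper coloring from the list assignment `L`. -/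
def ListColorable (G : SimpleGraph V) (L : V → Finset ℕ) : Prop :=
  ∃ f, IsProperListColoring G L f

/-- `G` is colorable from every list assignment with lists of size at least `m`. -/
def Choosable (G : SimpleGraph V) (m : ℕ) : Prop :=
  ∀ L : V → Finset ℕ, (∀ v, m ≤ (L v).card) → ListColorable G L

/-- The list chromatic number of `G`. -/
noncomputable def listChromaticNumber (G : SimpleGraph V) : ℕ :=
  sInf { m | Choosable G m }

/-- `G` is strong `k`-chromatic-choosable: `χ(G) = k` and every `(k-1)`-assignment
from which `G` is not colorable is constant. -/
def StrongCC (G : SimpleGraph V) (k : ℕ) : Prop :=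
  G.chromaticNumber = (k : ℕ∞) ∧
    ∀ L : V → Finset ℕ, (∀ v, (L v).card = k - 1) → ¬ ListColorable G L →
      ∀ u v : V, L u = L v

/-- The number of proper `L`-colorings of `G`. -/
noncomputable def numColorings (G : SimpleGraph V) (L : V → Finset ℕ) : ℕ :=
  Set.ncard { f : V → ℕ | IsProperListColoring G L f }

/-- The list color function `P_ℓ(G,k)`: the minimum number of proper `L`-colorings
over all `k`-assignments `L`. -/
noncomputable def listColorFunction (G : SimpleGraph V) (k : ℕ) : ℕ :=
  sInf { n | ∃ L : V → Finset ℕ, (∀ v, (L v).card = k) ∧ n = numColorings G L }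

/-- The chromatic polynomial `P(G,k)`: the number of proper colorings with colors
from `{0, …, k-1}`. -/
noncomputable def chromPoly (G : SimpleGraph V) (k : ℕ) : ℕ :=
  numColorings G (fun _ => Finset.range k)

/-- The join `G ∨ K_p` of `G` with the complete graph on `p` vertices. -/
def joinK (G : SimpleGraph V) (p : ℕ) : SimpleGraph (V ⊕ Fin p) :=
  SimpleGraph.fromRel (fun a b =>
    match a, b with
    | Sum.inl u, Sum.inl v => G.Adj u v
    | _, _ => True)

/-- The star `K_{1,s}`: center `none` adjacent to the `s` leaves. -/
def starGraph (s : ℕ) : SimpleGraph (Option (Fin s)) :=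
  SimpleGraph.fromRel (fun a _ => a = none)

/-- The cycle graph `C_n` on `Fin n` (for `n ≥ 3`). -/
def cycGraph (n : ℕ) : SimpleGraph (Fin n) :=
  SimpleGraph.fromRel (fun a b => b.val = (a.val + 1) % n)

end ListColoringDefs



open Finset

namespace Stmt15

/-- Colorings of a path with given lists, head forbidden `b`, last forbidden `e`. -/
def Cpath (b e : ℕ) : List (Finset ℕ) → Finset (List ℕ)
  | [] => {[]}
  | [L] => ((L.erase b).erase e).image (fun c => [c])
  | L :: L' :: LL => (L.erase b).biUnion fun c => (Cpath c e (L' :: LL)).image (c :: ·)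

lemma mem_Cpath_cons {b e : ℕ} {L L' : Finset ℕ} {LL : List (Finset ℕ)} {x : List ℕ} :
    x ∈ Cpath b e (L :: L' :: LL) ↔
      ∃ c ∈ L.erase b, ∃ y ∈ Cpath c e (L' :: LL), c :: y = x := by
  simp [Cpath]

lemma card_Cpath_cons (b e : ℕ) (L L' : Finset ℕ) (LL : List (Finset ℕ)) :
    (Cpath b e (L :: L' :: LL)).card
      = ∑ c ∈ L.erase b, (Cpath c e (L' :: LL)).card := by
  rw [Cpath, Finset.card_biUnion]
  · refine Finset.sum_congr rfl fun c _ => Finset.card_image_of_injective _ ?_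
    exact fun a b h => by simpa using h
  · intro c hc d hd hcd
    simp only [Finset.disjoint_left, Finset.mem_image]
    rintro x ⟨y, _, rfl⟩ ⟨z, _, hz⟩
    exact hcd (List.head_eq_of_cons_eq hz.symm)

lemma length_of_mem_Cpath {b e : ℕ} {LL : List (Finset ℕ)} {x : List ℕ}
    (h : x ∈ Cpath b e LL) : x.length = LL.length := by
  induction LL generalizing b x with
  | nil => simp [Cpath] at h; simp [h]
  | cons L LL ih =>
    cases LL with
    | nil =>
      simp only [Cpath, Finset.mem_image] at h
      obtain ⟨c, _, rfl⟩ := h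
      rfl
    | cons L' LL' =>
      rw [mem_Cpath_cons] at h
      obtain ⟨c, _, y, hy, rfl⟩ := h
      simpa using ih (hy)

/-- Lower bound: `(k-1)^len` colorings when the end-forbidden color avoids the last list. -/
lemma le_card_Cpath_of_not_mem_last (k : ℕ) :
    ∀ (LL : List (Finset ℕ)) (b e : ℕ), (∀ L ∈ LL, k ≤ L.card) →
    (∀ h : LL ≠ [], e ∉ LL.getLast h) →
    (k - 1) ^ LL.length ≤ (Cpath b e LL).card := by
  intro LL
  induction LL with
  | nil => simp [Cpath]
  | cons L LL ih =>
    intro b e hcard hlast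
    cases LL with
    | nil =>
      have he : e ∉ L.erase b := fun hme =>
        hlast (by simp) (by simpa [List.getLast] using Finset.mem_of_mem_erase hme)
      rw [Cpath, Finset.erase_eq_of_notMem he]
      rw [Finset.card_image_of_injective _ (fun a b h => by simpa using h)]
      have : k - 1 ≤ (L.erase b).card := by
        have := hcard L (by simp)
        have := Finset.card_erase_of_mem (s := L) (a := b)
        by_cases hb : b ∈ L
        · rw [Finset.card_erase_of_mem hb]; omega
        · rw [Finset.erase_eq_of_notMem hb]; omega
      simpa using this
    | cons L' LL' =>
      rw [card_Cpath_cons]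
      have hstep : ∀ c ∈ L.erase b, (k - 1) ^ (L' :: LL').length
          ≤ (Cpath c e (L' :: LL')).card := by
        intro c _
        exact ih c e (fun M hM => hcard M (by simp [hM]))
          (fun h => by simpa [List.getLast] using hlast (by simp))
      calc (k - 1) ^ (L :: L' :: LL').length
          = (k - 1) * (k - 1) ^ (L' :: LL').length := by
            simp only [List.length_cons]; rw [pow_succ']
        _ ≤ (L.erase b).card * (k - 1) ^ (L' :: LL').length := by
            have : k - 1 ≤ (L.erase b).card := by
              have := hcard L (by simp)
              by_cases hb : b ∈ L
              · rw [Finset.card_erase_of_mem hb]; omega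
              · rw [Finset.erase_eq_of_notMem hb]; omega
            exact Nat.mul_le_mul_right _ this
        _ ≤ ∑ c ∈ L.erase b, (Cpath c e (L' :: LL')).card := by
            simpa using Finset.card_nsmul_le_sum (L.erase b) _ _ hstep

/-- Lower bound: `2^(len-1)` colorings from 3-lists with arbitrary forbidden ends. -/
lemma le_card_Cpath (LL : List (Finset ℕ)) :
    ∀ (b e : ℕ), (∀ L ∈ LL, 3 ≤ L.card) →
    2 ^ (LL.length - 1) ≤ (Cpath b e LL).card := by
  induction LL with
  | nil => simp [Cpath]
  | cons L LL ih =>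
    intro b e hcard
    cases LL with
    | nil =>
      have h3 := hcard L (by simp)
      rw [Cpath, Finset.card_image_of_injective _ (fun a b h => by simpa using h)]
      have h1 : L.card - 2 ≤ ((L.erase b).erase e).card := by
        have hb : L.card - 1 ≤ (L.erase b).card := by
          by_cases hb : b ∈ L
          · rw [Finset.card_erase_of_mem hb]
          · rw [Finset.erase_eq_of_notMem hb]; omega
        by_cases he : e ∈ L.erase b
        · rw [Finset.card_erase_of_mem he]; omega
        · rw [Finset.erase_eq_of_notMem he]; omega
      simp only [List.length_cons, List.length_nil]
      omega
    | cons L' LL' =>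
      rw [card_Cpath_cons]
      have hstep : ∀ c ∈ L.erase b, 2 ^ ((L' :: LL').length - 1)
          ≤ (Cpath c e (L' :: LL')).card :=
        fun c _ => ih c e (fun M hM => hcard M (by simp [hM]))
      have hL : 2 ≤ (L.erase b).card := by
        have := hcard L (by simp)
        by_cases hb : b ∈ L
        · rw [Finset.card_erase_of_mem hb]; omega
        · rw [Finset.erase_eq_of_notMem hb]; omega
      calc 2 ^ ((L :: L' :: LL').length - 1)
          = 2 * 2 ^ ((L' :: LL').length - 1) := by
            simp only [List.length_cons, Nat.add_sub_cancel]
            rw [pow_succ']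
        _ ≤ (L.erase b).card * 2 ^ ((L' :: LL').length - 1) :=
            Nat.mul_le_mul_right _ hL
        _ ≤ ∑ c ∈ L.erase b, (Cpath c e (L' :: LL')).card := by
            simpa using Finset.card_nsmul_le_sum (L.erase b) _ _ hstep


/-- The pair `(X m, Y m)` counting path colorings of `replicate m S` with both
end-forbidden colors in `S`, equal resp. distinct. -/
def XY : ℕ → ℕ × ℕ
  | 0 => (0, 0)
  | 1 => (2, 1)
  | (m+2) => (2 * (XY (m+1)).2, (XY (m+1)).1 + (XY (m+1)).2)

lemma card_Cpath_replicate (m : ℕ) : ∀ (S : Finset ℕ) (b e : ℕ), S.card = 3 →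
    b ∈ S → e ∈ S →
    (b = e → (Cpath b e (List.replicate (m+1) S)).card = (XY (m+1)).1) ∧
    (b ≠ e → (Cpath b e (List.replicate (m+1) S)).card = (XY (m+1)).2) := by
  induction m with
  | zero =>
    intro S b e hS hb he
    constructor
    · rintro rfl
      simp only [List.replicate, Cpath, XY]
      rw [Finset.card_image_of_injective _ (fun a b h => by simpa using h)]
      rw [Finset.erase_idem, Finset.card_erase_of_mem hb, hS]
    · intro hbe
      simp only [List.replicate, Cpath, XY]
      rw [Finset.card_image_of_injective _ (fun a b h => by simpa using h)]
      rw [Finset.card_erase_of_mem (Finset.mem_erase.2 ⟨Ne.symm hbe, he⟩),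
        Finset.card_erase_of_mem hb, hS]
  | succ m ih =>
    intro S b e hS hb he
    have hrep : List.replicate (m+2) S = S :: S :: List.replicate m S := rfl
    have herase : (S.erase b).card = 2 := by rw [Finset.card_erase_of_mem hb, hS]
    constructor
    · rintro rfl
      rw [hrep, card_Cpath_cons]
      have : ∀ c ∈ S.erase b, (Cpath c b (S :: List.replicate m S)).card = (XY (m+1)).2 := by
        intro c hc
        have hc' := Finset.mem_erase.1 hc
        exact (ih S c b hS hc'.2 hb).2 hc'.1
      rw [Finset.sum_congr rfl this, Finset.sum_const, herase]
      show 2 * (XY (m+1)).2 = (XY (m+2)).1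
      rfl
    · intro hbe
      rw [hrep, card_Cpath_cons]
      have he' : e ∈ S.erase b := Finset.mem_erase.2 ⟨Ne.symm hbe, he⟩
      obtain ⟨t, ht⟩ : ∃ t, (S.erase b).erase e = {t} := by
        refine Finset.card_eq_one.1 ?_
        rw [Finset.card_erase_of_mem he', herase]
      have htmem : t ∈ (S.erase b).erase e := ht ▸ Finset.mem_singleton_self t
      have ht1 := Finset.mem_erase.1 htmem
      have ht2 := Finset.mem_erase.1 ht1.2
      have hsplit : S.erase b = insert e {t} := by
        rw [← ht, Finset.insert_erase he']
      rw [hsplit, Finset.sum_insert (by simp [Ne.symm ht1.1])]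
      rw [Finset.sum_singleton]
      have hrep1 : S :: List.replicate m S = List.replicate (m+1) S := rfl
      rw [hrep1, ((ih S e e hS he he).1 rfl), ((ih S t e hS ht2.2 he).2 ht1.1)]
      show (XY (m+1)).1 + (XY (m+1)).2 = (XY (m+2)).2
      rfl

lemma XY_closed (m : ℕ) :
    (3 * ((XY (m+1)).1 : ℤ) = 2^(m+2) - 2*(-1:ℤ)^(m+1)) ∧
    (3 * ((XY (m+1)).2 : ℤ) = 2^(m+2) + (-1:ℤ)^(m+1)) := by
  induction m with
  | zero => norm_num [XY]
  | succ m ih =>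
    have h1 : (XY (m+2)).1 = 2 * (XY (m+1)).2 := rfl
    have h2 : (XY (m+2)).2 = (XY (m+1)).1 + (XY (m+1)).2 := rfl
    constructor
    · rw [h1]; push_cast; rw [show (3:ℤ) * (2 * (XY (m+1)).2) = 2 * (3 * (XY (m+1)).2) by ring,
        ih.2]; ring
    · rw [h2]; push_cast
      rw [show (3:ℤ) * ((XY (m+1)).1 + (XY (m+1)).2)
        = 3 * ((XY (m+1)).1:ℤ) + 3 * ((XY (m+1)).2:ℤ) by ring, ih.1, ih.2]; ring

lemma three_mul_X_even (l : ℕ) (hl : 1 ≤ l) : 3 * (XY (2*l)).1 = 2^(2*l+1) - 2 := by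
  obtain ⟨m, hm⟩ : ∃ m, 2*l = m + 1 := ⟨2*l - 1, by omega⟩
  have h := (XY_closed m).1
  have heven : Even (m+1) := by
    have : m + 1 = 2 * l := hm.symm
    exact ⟨l, by omega⟩
  rw [heven.neg_one_pow] at h
  have h2 : (2:ℕ) ≤ 2^(m+2) := by
    calc (2:ℕ) = 2^1 := by norm_num
    _ ≤ 2^(m+2) := Nat.pow_le_pow_right (by norm_num) (by omega)
  have hgoal : 3 * (XY (m+1)).1 = 2^(m+2) - 2 := by
    zify [h2]
    push_cast at h
    linarith
  rw [hm, show m + 1 + 1 = m + 2 from rfl]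
  exact hgoal


lemma mem_Cpath_cons' {b e : ℕ} {L : Finset ℕ} {LL : List (Finset ℕ)} (h : LL ≠ [])
    {x : List ℕ} : x ∈ Cpath b e (L :: LL) ↔
      ∃ c ∈ L.erase b, ∃ y ∈ Cpath c e LL, c :: y = x := by
  cases LL with
  | nil => exact absurd rfl h
  | cons L' LL' => exact mem_Cpath_cons

lemma mem_Cpath_ofFn : ∀ (k : ℕ) (g : Fin (k+1) → ℕ) (Ls : Fin (k+1) → Finset ℕ)
    (b e : ℕ), (List.ofFn g ∈ Cpath b e (List.ofFn Ls) ↔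
      (∀ i, g i ∈ Ls i) ∧ (∀ i : Fin k, g i.succ ≠ g i.castSucc) ∧
      g 0 ≠ b ∧ g (Fin.last k) ≠ e) := by
  intro k
  induction k with
  | zero =>
    intro g Ls b e
    have h1 : List.ofFn g = [g 0] := rfl
    have h2 : List.ofFn Ls = [Ls 0] := rfl
    rw [h1, h2]
    simp only [Cpath, Finset.mem_image, Finset.mem_erase]
    constructor
    · rintro ⟨c, ⟨hce, hcb, hc⟩, hcg⟩
      have : c = g 0 := by simpa using hcg
      subst this
      exact ⟨fun i => by refine Fin.cases hc (fun j => j.elim0) i, fun i => i.elim0, hcb,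
        by simpa [Fin.last] using hce⟩
    · rintro ⟨hmem, -, hb, he⟩
      exact ⟨g 0, ⟨by simpa [Fin.last] using he, hb, hmem 0⟩, rfl⟩
  | succ k ih =>
    intro g Ls b e
    rw [List.ofFn_succ (f := g), List.ofFn_succ (f := Ls)]
    rw [mem_Cpath_cons' (by
      have : (List.ofFn fun i : Fin (k+1) => Ls i.succ).length = k+1 := by simp
      intro hnil; rw [hnil] at this; simp at this)]
    constructor
    · rintro ⟨c, hc, y, hy, hcy⟩
      have hcg : c = g 0 := List.head_eq_of_cons_eq hcy
      have hyg : y = List.ofFn fun i => g i.succ := (List.tail_eq_of_cons_eq hcy)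
      subst hcg; subst hyg
      rw [ih (fun i => g i.succ) (fun i => Ls i.succ) (g 0) e] at hy
      obtain ⟨hmem, hchain, hhead, hlast⟩ := hy
      have hc' := Finset.mem_erase.1 hc
      refine ⟨?_, ?_, hc'.1, ?_⟩
      · intro i
        refine Fin.cases hc'.2 (fun j => hmem j) i
      · intro i
        refine Fin.cases ?_ ?_ i
        · simpa using hhead
        · intro j
          have := hchain j
          rw [Fin.succ_castSucc] at this
          exact this
      · rw [← Fin.succ_last]
        exact hlast
    · rintro ⟨hmem, hchain, hb, he⟩
      refine ⟨g 0, Finset.mem_erase.2 ⟨hb, hmem 0⟩, List.ofFn fun i => g i.succ, ?_, rfl⟩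
      rw [ih (fun i => g i.succ) (fun i => Ls i.succ) (g 0) e]
      refine ⟨fun j => hmem j.succ, ?_, ?_, ?_⟩
      · intro j
        have := hchain j.succ
        rw [← Fin.succ_castSucc] at this
        exact this
      · simpa using hchain 0
      · rw [Fin.succ_last]
        exact he

/-- Colorings of the cycle on the given list of color-lists. -/
def CycList : List (Finset ℕ) → Finset (List ℕ)
  | [] => {[]}
  | L :: LL => L.biUnion fun c => (Cpath c c LL).image (c :: ·)

lemma card_CycList_cons (L : Finset ℕ) (LL : List (Finset ℕ)) :
    (CycList (L :: LL)).card = ∑ c ∈ L, (Cpath c c LL).card := by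
  rw [CycList, Finset.card_biUnion]
  · exact Finset.sum_congr rfl fun c _ =>
      Finset.card_image_of_injective _ (fun a b h => by simpa using h)
  · intro c hc d hd hcd
    simp only [Finset.disjoint_left, Finset.mem_image]
    rintro x ⟨y, _, rfl⟩ ⟨z, _, hz⟩
    exact hcd (List.head_eq_of_cons_eq hz.symm)

lemma castSucc_add_one' (k : ℕ) (j : Fin (k+1)) :
    (j.castSucc + 1 : Fin (k+2)) = j.succ := by
  apply Fin.ext
  rw [Fin.val_add]
  simp only [Fin.coe_castSucc, Fin.val_one, Fin.val_succ]
  exact Nat.mod_eq_of_lt (by omega)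

lemma last_add_one' (k : ℕ) : (Fin.last (k+1) + 1 : Fin (k+2)) = 0 := by
  apply Fin.ext
  rw [Fin.val_add]
  simp [Fin.val_last]

lemma cyc_translate (k : ℕ) (f : Fin (k+2) → ℕ) :
    (∀ i : Fin (k+2), f (i + 1) ≠ f i) ↔
      ((∀ j : Fin (k+1), f j.succ ≠ f j.castSucc) ∧ f 0 ≠ f (Fin.last (k+1))) := by
  constructor
  · intro h
    refine ⟨fun j => by simpa [castSucc_add_one' k j] using h j.castSucc, ?_⟩
    simpa [last_add_one' k] using h (Fin.last (k+1))
  · rintro ⟨h1, h2⟩ i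
    refine Fin.lastCases ?_ ?_ i
    · rw [last_add_one' k]; exact h2
    · intro j; rw [castSucc_add_one' k j]; exact h1 j

lemma mem_CycList_ofFn (k : ℕ) (f : Fin (k+2) → ℕ) (L : Fin (k+2) → Finset ℕ) :
    List.ofFn f ∈ CycList (List.ofFn L) ↔
      (∀ i, f i ∈ L i) ∧ (∀ i : Fin (k+2), f (i + 1) ≠ f i) := by
  rw [List.ofFn_succ (f := f), List.ofFn_succ (f := L)]
  simp only [CycList, Finset.mem_biUnion, Finset.mem_image]
  rw [cyc_translate k f]
  constructor
  · rintro ⟨c, hc, y, hy, hcy⟩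
    have hcg : c = f 0 := List.head_eq_of_cons_eq hcy
    have hyg : y = List.ofFn fun i => f i.succ := (List.tail_eq_of_cons_eq hcy)
    subst hcg; subst hyg
    rw [mem_Cpath_ofFn k (fun i => f i.succ) (fun i => L i.succ) (f 0) (f 0)] at hy
    obtain ⟨hmem, hchain, hhead, hlast⟩ := hy
    refine ⟨?_, ?_, ?_⟩
    · intro i
      refine Fin.cases hc (fun j => hmem j) i
    · intro j
      refine Fin.cases ?_ ?_ j
      · simpa using hhead
      · intro j'
        have := hchain j'
        rw [Fin.succ_castSucc] at this
        exact this
    · rw [← Fin.succ_last]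
      exact hlast.symm
  · rintro ⟨hmem, hchain, hwrap⟩
    refine ⟨f 0, hmem 0, List.ofFn fun i => f i.succ, ?_, rfl⟩
    rw [mem_Cpath_ofFn k (fun i => f i.succ) (fun i => L i.succ) (f 0) (f 0)]
    refine ⟨fun j => hmem j.succ, ?_, ?_, ?_⟩
    · intro j'
      have := hchain j'.succ
      rw [← Fin.succ_castSucc] at this
      exact this
    · simpa using hchain 0
    · rw [Fin.succ_last]
      exact hwrap.symm

/-- Proper colorings of the `n`-cycle as functions, from the lists `L`. -/
def FnCyc (n : ℕ) [NeZero n] (L : Fin n → Finset ℕ) : Finset (Fin n → ℕ) :=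
  (Fintype.piFinset L).filter (fun f => ∀ i, f (i+1) ≠ f i)

lemma mem_FnCyc {n : ℕ} [NeZero n] {L : Fin n → Finset ℕ} {f : Fin n → ℕ} :
    f ∈ FnCyc n L ↔ (∀ i, f i ∈ L i) ∧ ∀ i, f (i+1) ≠ f i := by
  simp [FnCyc, Fintype.mem_piFinset]

lemma FnCyc_mono {n : ℕ} [NeZero n] {L₁ L₂ : Fin n → Finset ℕ} (h : ∀ i, L₁ i ⊆ L₂ i) :
    FnCyc n L₁ ⊆ FnCyc n L₂ := by
  intro f hf
  rw [mem_FnCyc] at *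
  exact ⟨fun i => h i (hf.1 i), hf.2⟩

lemma length_mem_CycList {L : Finset ℕ} {LL : List (Finset ℕ)} {x : List ℕ}
    (h : x ∈ CycList (L :: LL)) : x.length = LL.length + 1 := by
  simp only [CycList, Finset.mem_biUnion, Finset.mem_image] at h
  obtain ⟨c, _, y, hy, rfl⟩ := h
  simp [length_of_mem_Cpath hy]

lemma card_FnCyc (k : ℕ) (L : Fin (k+2) → Finset ℕ) :
    (FnCyc (k+2) L).card = (CycList (List.ofFn L)).card := by
  apply Finset.card_bij (fun f _ => List.ofFn f)
  · intro f hf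
    rw [mem_FnCyc] at hf
    exact (mem_CycList_ofFn k f L).2 ⟨hf.1, hf.2⟩
  · intro f _ g _ h
    exact List.ofFn_injective h
  · intro x hx
    have hlen : x.length = k + 2 := by
      rw [List.ofFn_succ (f := L)] at hx
      have := length_mem_CycList hx
      simpa using this
    refine ⟨fun i => x[i.val]'(by omega), ?_, ?_⟩
    · have hx2 : x = List.ofFn fun i : Fin (k+2) => x[i.val]'(by omega) := by
        apply List.ext_getElem
        · simp [hlen]
        · intro i h1 h2
          simp only [List.getElem_ofFn]
      rw [mem_FnCyc]
      rw [hx2] at hx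
      exact (mem_CycList_ofFn k _ L).1 hx
    · apply List.ext_getElem
      · simp [hlen]
      · intro i h1 h2
        simp only [List.getElem_ofFn]

lemma card_FnCyc' (n : ℕ) (hn : 3 ≤ n) [NeZero n] (L : Fin n → Finset ℕ) :
    (FnCyc n L).card = (CycList (List.ofFn L)).card := by
  obtain ⟨k, rfl⟩ : ∃ k, n = k+2 := ⟨n-2, by omega⟩
  exact card_FnCyc k L

lemma card_FnCyc_rot (n : ℕ) [NeZero n] (L : Fin n → Finset ℕ) (k : Fin n) :
    (FnCyc n (fun i => L (i + k))).card = (FnCyc n L).card := by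
  apply Finset.card_bij' (fun f _ => fun x => f (x - k)) (fun g _ => fun x => g (x + k))
  · intro f hf
    rw [mem_FnCyc] at *
    constructor
    · intro i
      have := hf.1 (i - k)
      simpa [sub_add_cancel] using this
    · intro i
      have := hf.2 (i - k)
      rw [show i - k + 1 = i + 1 - k from (add_sub_right_comm i 1 k).symm] at this
      exact this
  · intro g hg
    rw [mem_FnCyc] at *
    constructor
    · intro i; exact hg.1 (i + k)
    · intro i
      have := hg.2 (i + k)
      rw [show i + k + 1 = i + 1 + k from add_right_comm i k 1] at this
      exact this
  · intro f _; funext x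
    show f (x + k - k) = f x
    rw [add_sub_cancel_right]
  · intro g _; funext x
    show g (x - k + k) = g x
    rw [sub_add_cancel]

lemma card_FnCyc_refl (n : ℕ) [NeZero n] (L : Fin n → Finset ℕ) (k : Fin n) :
    (FnCyc n (fun i => L (k - i))).card = (FnCyc n L).card := by
  have hproper : ∀ (f : Fin n → ℕ), (∀ i, f (i+1) ≠ f i) →
      ∀ i : Fin n, f (k - (i+1)) ≠ f (k - i) := by
    intro f hf i
    have h1 : k - (i + 1) = k - i - 1 := sub_add_eq_sub_sub k i 1
    have h2 : (k - i - 1) + 1 = k - i := sub_add_cancel (k - i) 1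
    have := hf (k - i - 1)
    rw [h2] at this
    rw [h1]
    exact this.symm
  apply Finset.card_bij' (fun f _ => fun x => f (k - x)) (fun g _ => fun x => g (k - x))
  · intro f hf
    rw [mem_FnCyc] at *
    refine ⟨?_, fun i => hproper f hf.2 i⟩
    intro i
    have := hf.1 (k - i)
    simpa [sub_sub_cancel] using this
  · intro g hg
    rw [mem_FnCyc] at *
    exact ⟨fun i => hg.1 (k - i), fun i => hproper g hg.2 i⟩
  · intro f _; funext x
    show f (k - (k - x)) = f x
    rw [sub_sub_cancel]
  · intro g _; funext x
    show g (k - (k - x)) = g x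
    rw [sub_sub_cancel]

lemma getLast_tail_ofFn (k : ℕ) (L : Fin (k+2) → Finset ℕ)
    (h : (List.ofFn fun j : Fin (k+1) => L j.succ) ≠ []) :
    (List.ofFn fun j : Fin (k+1) => L j.succ).getLast h = L (Fin.last (k+1)) := by
  rw [List.getLast_eq_getElem]
  simp only [List.getElem_ofFn, List.length_ofFn]
  congr 1


/-- Key branch bound: if some color of the first list avoids the last list,
the cycle has at least `2^n` colorings. -/
lemma le_card_FnCyc_aux (k : ℕ) (L : Fin (k+2) → Finset ℕ)
    (h3 : ∀ i, 3 ≤ (L i).card) (c : ℕ) (hc0 : c ∈ L 0)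
    (hlast : c ∉ L (Fin.last (k+1))) :
    2 ^ (k+2) ≤ (FnCyc (k+2) L).card := by
  rw [card_FnCyc k L, List.ofFn_succ (f := L), card_CycList_cons]
  rw [← Finset.add_sum_erase _ _ hc0]
  have htail3 : ∀ M ∈ (List.ofFn fun j : Fin (k+1) => L j.succ), 3 ≤ M.card := by
    intro M hM
    rw [List.mem_ofFn] at hM
    obtain ⟨j, rfl⟩ := hM
    exact h3 _
  have hlen : (List.ofFn fun j : Fin (k+1) => L j.succ).length = k + 1 := by simp
  have hb1 : 2 ^ (k+1) ≤ (Cpath c c (List.ofFn fun j : Fin (k+1) => L j.succ)).card := by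
    have := le_card_Cpath_of_not_mem_last 3 _ c c htail3 (fun h => by
      rw [getLast_tail_ofFn k L]
      exact hlast)
    simpa [hlen] using this
  have hb2 : 2 * 2 ^ k ≤ ∑ c' ∈ (L 0).erase c,
      (Cpath c' c' (List.ofFn fun j : Fin (k+1) => L j.succ)).card := by
    have hcard : 2 ≤ ((L 0).erase c).card := by
      rw [Finset.card_erase_of_mem hc0]
      have := h3 0
      omega
    have hstep : ∀ c' ∈ (L 0).erase c,
        2 ^ k ≤ (Cpath c' c' (List.ofFn fun j : Fin (k+1) => L j.succ)).card := by
      intro c' _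
      have := le_card_Cpath _ c' c' htail3
      simpa [hlen] using this
    calc 2 * 2 ^ k ≤ ((L 0).erase c).card * 2 ^ k := Nat.mul_le_mul_right _ hcard
      _ ≤ _ := by simpa using Finset.card_nsmul_le_sum ((L 0).erase c) _ _ hstep
  calc 2 ^ (k+2) = 2 ^ (k+1) + 2 * 2 ^ k := by ring
    _ ≤ _ := Nat.add_le_add hb1 hb2

open Fin.NatCast Fin.CommRing in
lemma const_of_step {n : ℕ} [NeZero n] (K : Fin n → Finset ℕ)
    (h : ∀ i, K (i+1) = K i) : ∀ i, K i = K 0 := by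
  have key : ∀ m : ℕ, K ((m : ℕ) : Fin n) = K 0 := by
    intro m
    induction m with
    | zero => simp
    | succ m ih =>
      have : ((m + 1 : ℕ) : Fin n) = ((m : ℕ) : Fin n) + 1 := by push_cast; ring
      rw [this, h, ih]
  intro i
  have := key i.val
  rwa [Fin.cast_val_eq_self] at this

lemma last_eq_neg_one (k : ℕ) : (Fin.last (k+1) : Fin (k+2)) = -1 :=
  eq_neg_of_add_eq_zero_left (last_add_one' k)

open Fin.NatCast Fin.CommRing in
/-- If not all lists are equal, transport to the configuration of `le_card_FnCyc_aux`. -/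
lemma le_card_FnCyc_of_ne (n : ℕ) (hn : 3 ≤ n) [NeZero n] (L : Fin n → Finset ℕ)
    (hcards : ∀ i, 3 ≤ (L i).card) (i : Fin n) (hne : L (i+1) ≠ L i) :
    2 ^ n ≤ (FnCyc n L).card := by
  obtain ⟨k, rfl⟩ : ∃ k, n = k+2 := ⟨n-2, by omega⟩
  by_cases hsub : L (i+1) ⊆ L i
  · -- some c ∈ L i \ L (i+1); use reflection j ↦ i - j
    have : ¬ (L i ⊆ L (i+1)) := fun h => hne (Finset.Subset.antisymm hsub h)
    obtain ⟨c, hc1, hc2⟩ := Finset.not_subset.1 this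
    rw [← card_FnCyc_refl (k+2) L i]
    apply le_card_FnCyc_aux k (fun j => L (i - j)) (fun j => hcards _) c
    · simpa using hc1
    · rw [last_eq_neg_one, sub_neg_eq_add]
      exact hc2
  · -- some c ∈ L (i+1) \ L i; use rotation j ↦ j + (i+1)
    obtain ⟨c, hc1, hc2⟩ := Finset.not_subset.1 hsub
    rw [← card_FnCyc_rot (k+2) L (i+1)]
    apply le_card_FnCyc_aux k (fun j => L (j + (i+1))) (fun j => hcards _) c
    · simpa using hc1
    · rw [last_eq_neg_one]
      rw [show (-1 : Fin (k+2)) + (i+1) = i by ring]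
      exact hc2

lemma card_CycList_replicate (l : ℕ) (hl : 1 ≤ l) (S : Finset ℕ) (hS : S.card = 3) :
    (CycList (List.replicate (2*l+1) S)).card = 2^(2*l+1) - 2 := by
  have h1 : List.replicate (2*l+1) S = S :: List.replicate (2*l) S := rfl
  rw [h1, card_CycList_cons]
  have h2 : ∀ c ∈ S, (Cpath c c (List.replicate (2*l) S)).card = (XY (2*l)).1 := by
    intro c hc
    have h2l : 2*l = (2*l-1)+1 := by omega
    rw [h2l]
    exact (card_Cpath_replicate (2*l-1) S c c hS hc hc).1 rfl
  rw [Finset.sum_congr rfl h2, Finset.sum_const, hS]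
  have := three_mul_X_even l hl
  simpa [smul_eq_mul] using this

/-- Main counting lower bound: any `3`-list assignment on an odd cycle of length
`2l+1 ≥ 3` admits at least `2^(2l+1) - 2` proper colorings. -/
lemma le_card_FnCyc (l : ℕ) (hl : 1 ≤ l) (L : Fin (2*l+1) → Finset ℕ)
    (h3 : ∀ i, 3 ≤ (L i).card) :
    2^(2*l+1) - 2 ≤ (FnCyc (2*l+1) L).card := by
  haveI : NeZero (2*l+1) := ⟨by omega⟩
  by_cases hstep : ∀ i, L (i+1) = L i
  · -- all lists equal; shrink to a 3-subset and count exactly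
    have hconst := const_of_step L hstep
    obtain ⟨S, hSsub, hScard⟩ := Finset.exists_subset_card_eq (h3 0)
    have hsub : FnCyc (2*l+1) (fun _ => S) ⊆ FnCyc (2*l+1) L := by
      apply FnCyc_mono
      intro i
      rw [hconst i]
      exact hSsub
    have hcount : (FnCyc (2*l+1) (fun _ => S)).card = 2^(2*l+1) - 2 := by
      rw [card_FnCyc' (2*l+1) (by omega) _, List.ofFn_const,
        card_CycList_replicate l hl S hScard]
    calc 2^(2*l+1) - 2 = (FnCyc (2*l+1) (fun _ => S)).card := hcount.symm
      _ ≤ _ := Finset.card_le_card hsub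
  · push_neg at hstep
    obtain ⟨i, hi⟩ := hstep
    have hmain : 2 ^ (2*l+1) ≤ (FnCyc (2*l+1) L).card :=
      le_card_FnCyc_of_ne (2*l+1) (by omega) L h3 i hi
    omega

/-- Existence of a proper coloring from `3`-lists on any cycle of length ≥ 3. -/
lemma nonempty_FnCyc_of_three (n : ℕ) (hn : 3 ≤ n) [NeZero n] (L : Fin n → Finset ℕ)
    (h3 : ∀ i, 3 ≤ (L i).card) : (FnCyc n L).Nonempty := by
  obtain ⟨k, rfl⟩ : ∃ k, n = k+2 := ⟨n-2, by omega⟩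
  rw [← Finset.card_pos, card_FnCyc k L, List.ofFn_succ (f := L), card_CycList_cons]
  obtain ⟨c, hc⟩ := Finset.card_pos.1 (by have := h3 0; omega : 0 < (L 0).card)
  have htail3 : ∀ M ∈ (List.ofFn fun j : Fin (k+1) => L j.succ), 3 ≤ M.card := by
    intro M hM
    rw [List.mem_ofFn] at hM
    obtain ⟨j, rfl⟩ := hM
    exact h3 _
  have hpos : 0 < (Cpath c c (List.ofFn fun j : Fin (k+1) => L j.succ)).card := by
    have := le_card_Cpath _ c c htail3
    have h2 : 0 < 2 ^ ((List.ofFn fun j : Fin (k+1) => L j.succ).length - 1) :=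
      Nat.pow_pos (by norm_num)
    omega
  calc 0 < (Cpath c c (List.ofFn fun j : Fin (k+1) => L j.succ)).card := hpos
    _ ≤ _ := Finset.single_le_sum (f := fun c' => (Cpath c' c' _).card)
        (fun _ _ => Nat.zero_le _) hc

open Fin.NatCast Fin.CommRing in
/-- If a cycle of length ≥ 3 with `2`-lists has no proper coloring,
then all lists are equal. -/
lemma lists_eq_of_uncolorable (n : ℕ) (hn : 3 ≤ n) [NeZero n] (K : Fin n → Finset ℕ)
    (h2 : ∀ i, 2 ≤ (K i).card) (hun : ¬ (FnCyc n K).Nonempty) :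
    ∀ i j, K i = K j := by
  by_contra hcon
  push_neg at hcon
  obtain ⟨i0, j0, hij⟩ := hcon
  have hstep : ∃ i, K (i+1) ≠ K i := by
    by_contra hall
    push_neg at hall
    have := const_of_step K hall
    exact hij ((this i0).trans (this j0).symm)
  obtain ⟨i, hi⟩ := hstep
  obtain ⟨k, rfl⟩ : ∃ k, n = k+2 := ⟨n-2, by omega⟩
  apply hun
  rw [← Finset.card_pos]
  have key : ∀ (L : Fin (k+2) → Finset ℕ), (∀ j, 2 ≤ (L j).card) →
      ∀ c, c ∈ L 0 → c ∉ L (Fin.last (k+1)) → 0 < (FnCyc (k+2) L).card := by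
    intro L hL c hc0 hclast
    rw [card_FnCyc k L, List.ofFn_succ (f := L), card_CycList_cons]
    have htail2 : ∀ M ∈ (List.ofFn fun j : Fin (k+1) => L j.succ), 2 ≤ M.card := by
      intro M hM
      rw [List.mem_ofFn] at hM
      obtain ⟨j, rfl⟩ := hM
      exact hL _
    have hpos : 0 < (Cpath c c (List.ofFn fun j : Fin (k+1) => L j.succ)).card := by
      have := le_card_Cpath_of_not_mem_last 2 _ c c htail2 (fun h => by
        rw [getLast_tail_ofFn k L]
        exact hclast)
      have h1 : 0 < (2-1) ^ ((List.ofFn fun j : Fin (k+1) => L j.succ).length) := by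
        norm_num
      omega
    calc 0 < _ := hpos
      _ ≤ _ := Finset.single_le_sum (f := fun c' => (Cpath c' c' _).card)
          (fun _ _ => Nat.zero_le _) hc0
  by_cases hsub : K (i+1) ⊆ K i
  · have : ¬ (K i ⊆ K (i+1)) := fun h => hi (Finset.Subset.antisymm hsub h)
    obtain ⟨c, hc1, hc2⟩ := Finset.not_subset.1 this
    rw [← card_FnCyc_refl (k+2) K i]
    apply key (fun j => K (i - j)) (fun j => h2 _) c
    · simpa using hc1
    · rw [last_eq_neg_one, sub_neg_eq_add]
      exact hc2
  · obtain ⟨c, hc1, hc2⟩ := Finset.not_subset.1 hsub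
    rw [← card_FnCyc_rot (k+2) K (i+1)]
    apply key (fun j => K (j + (i+1))) (fun j => h2 _) c
    · simpa using hc1
    · rw [last_eq_neg_one]
      rw [show (-1 : Fin (k+2)) + (i+1) = i by ring]
      exact hc2

/-- Exact count for constant 3-lists on an odd cycle. -/
lemma card_FnCyc_const (l : ℕ) (hl : 1 ≤ l) (S : Finset ℕ) (hS : S.card = 3) :
    haveI : NeZero (2*l+1) := ⟨by omega⟩
    (FnCyc (2*l+1) (fun _ => S)).card = 2^(2*l+1) - 2 := by
  haveI : NeZero (2*l+1) := ⟨by omega⟩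
  rw [card_FnCyc' (2*l+1) (by omega) _, List.ofFn_const,
    card_CycList_replicate l hl S hS]

lemma val_one_of_two_le {n : ℕ} [NeZero n] (hn : 2 ≤ n) : (1 : Fin n).val = 1 := by
  rw [Fin.val_one']
  exact Nat.mod_eq_of_lt (by omega)

lemma val_add_one_mod {n : ℕ} [NeZero n] (hn : 2 ≤ n) (i : Fin n) :
    ((i + 1 : Fin n)).val = (i.val + 1) % n := by
  rw [Fin.val_add, val_one_of_two_le hn]

open Fin.NatCast Fin.CommRing in
/-- No proper coloring of an odd cycle uses only two colors. -/
lemma no_two_coloring {n : ℕ} [NeZero n] (hodd : n % 2 = 1) (hn : 2 ≤ n)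
    (f : Fin n → ℕ) (hp : ∀ i, f (i+1) ≠ f i) (a b : ℕ)
    (hmem : ∀ i, f i = a ∨ f i = b) : False := by
  have key : ∀ m : ℕ, (m % 2 = 0 → f (m : Fin n) = f 0) ∧
      (m % 2 = 1 → f (m : Fin n) ≠ f 0) := by
    intro m
    induction m with
    | zero => exact ⟨fun _ => by norm_num, fun h => by omega⟩
    | succ m ih =>
      have hcast : ((m + 1 : ℕ) : Fin n) = ((m : ℕ) : Fin n) + 1 := by push_cast; ring
      have hne := hp ((m : ℕ) : Fin n)
      rw [← hcast] at hne
      have h1 := hmem (((m+1 : ℕ)) : Fin n)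
      have h2 := hmem ((m : ℕ) : Fin n)
      have h0 := hmem 0
      constructor
      · intro h
        have hm1 : m % 2 = 1 := by omega
        have := ih.2 hm1
        rcases h1 with e1 | e1 <;> rcases h2 with e2 | e2 <;> rcases h0 with e0 | e0 <;>
          omega
      · intro h
        have hm0 : m % 2 = 0 := by omega
        have := ih.1 hm0
        rcases h1 with e1 | e1 <;> rcases h2 with e2 | e2 <;> rcases h0 with e0 | e0 <;>
          omega
  have h1 := (key n).2 hodd
  rw [Fin.natCast_self] at h1
  exact h1 rfl

lemma cyc_adj {n : ℕ} [NeZero n] (hn : 2 ≤ n) (i : Fin n) :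
    (cycGraph n).Adj i (i + 1) := by
  rw [cycGraph, SimpleGraph.fromRel_adj]
  refine ⟨?_, Or.inl (val_add_one_mod hn i)⟩
  intro h
  have h1 : (1 : Fin n) = 0 := by
    have := add_left_cancel (a := i) (b := (1:Fin n)) (c := 0)
    apply this
    rw [add_zero, ← h]
  have := congrArg Fin.val h1
  rw [val_one_of_two_le hn] at this
  simp at this

lemma proper_cyc {n : ℕ} [NeZero n] (hn : 2 ≤ n) {f : Fin n → ℕ}
    (h : ∀ i, f (i+1) ≠ f i) : ∀ u v, (cycGraph n).Adj u v → f u ≠ f v := by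
  intro u v hadj
  rw [cycGraph, SimpleGraph.fromRel_adj] at hadj
  obtain ⟨hne, hr | hr⟩ := hadj
  · have hv : v = u + 1 := by
      apply Fin.ext
      rw [val_add_one_mod hn u, hr]
    rw [hv]
    exact (h u).symm
  · have hu : u = v + 1 := by
      apply Fin.ext
      rw [val_add_one_mod hn v, hr]
    rw [hu]
    exact h v

lemma star_adj_iff {s : ℕ} {x y : Option (Fin s)} :
    (_root_.starGraph s).Adj x y ↔ x ≠ y ∧ (x = none ∨ y = none) := by
  rw [_root_.starGraph, SimpleGraph.fromRel_adj]

lemma star_adj {s : ℕ} (j : Fin s) : (_root_.starGraph s).Adj none (some j) :=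
  star_adj_iff.2 ⟨by simp, Or.inl rfl⟩

lemma choosable_mono {V : Type*} (G : SimpleGraph V) {a b : ℕ} (hab : a ≤ b)
    (h : Choosable G a) : Choosable G b :=
  fun L hL => h L (fun v => hab.trans (hL v))

lemma listChrom_eq {V : Type*} (G : SimpleGraph V) (k : ℕ) (hk : 1 ≤ k)
    (h1 : Choosable G k) (h2 : ¬ Choosable G (k-1)) : listChromaticNumber G = k := by
  apply le_antisymm (Nat.sInf_le h1)
  apply le_csInf ⟨k, h1⟩
  intro x hx
  replace hx : Choosable G x := hx
  by_contra hlt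
  push_neg at hlt
  exact h2 (choosable_mono G (by omega) hx)

lemma notChoosable2 (l s : ℕ) (hl : 1 ≤ l) :
    ¬ Choosable ((cycGraph (2*l+1)).boxProd (_root_.starGraph s)) 2 := by
  haveI : NeZero (2*l+1) := ⟨by omega⟩
  intro h
  have hcard : ∀ v : Fin (2*l+1) × Option (Fin s), 2 ≤ ((fun _ : Fin (2*l+1) × Option (Fin s) => ({0, 1} : Finset ℕ)) v).card := fun v => by
    show (2:ℕ) ≤ ({0,1} : Finset ℕ).card
    decide
  obtain ⟨f, hf1, hf2⟩ := h (fun _ => ({0, 1} : Finset ℕ)) hcard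
  refine no_two_coloring (n := 2*l+1) (by omega) (by omega) (fun a => f (a, none)) ?_ 0 1 ?_
  · intro i
    exact hf2 _ _ (SimpleGraph.boxProd_adj.mpr (Or.inl ⟨(cyc_adj (by omega) i).symm, rfl⟩))
  · intro i
    have := hf1 (i, none)
    simpa using this

lemma choosable4 (l s : ℕ) (hl : 1 ≤ l) :
    Choosable ((cycGraph (2*l+1)).boxProd (_root_.starGraph s)) 4 := by
  haveI : NeZero (2*l+1) := ⟨by omega⟩
  intro L hL
  obtain ⟨f0, hf0⟩ := nonempty_FnCyc_of_three (2*l+1) (by omega) (fun a => L (a, none))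
    (fun a => by show 3 ≤ (L (a, none)).card; have := hL (a, none); omega)
  rw [mem_FnCyc] at hf0
  have hleaf : ∀ j : Fin s, ∃ g : Fin (2*l+1) → ℕ,
      (∀ a, g a ∈ (L (a, some j)).erase (f0 a)) ∧ ∀ a, g (a+1) ≠ g a := by
    intro j
    obtain ⟨g, hg⟩ := nonempty_FnCyc_of_three (2*l+1) (by omega)
      (fun a => (L (a, some j)).erase (f0 a)) (fun a => by
        show 3 ≤ ((L (a, some j)).erase (f0 a)).card
        have h1 := hL (a, some j)
        have h2 := Finset.pred_card_le_card_erase (s := L (a, some j)) (a := f0 a)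
        omega)
    rw [mem_FnCyc] at hg
    exact ⟨g, hg.1, hg.2⟩
  choose g hg1 hg2 using hleaf
  refine ⟨fun p => Option.elim p.2 (f0 p.1) (fun j => g j p.1), ?_, ?_⟩
  · rintro ⟨a, x⟩
    cases x with
    | none => exact hf0.1 a
    | some j => exact Finset.mem_of_mem_erase (hg1 j a)
  · rintro ⟨a, x⟩ ⟨b, y⟩ hadj
    rw [SimpleGraph.boxProd_adj] at hadj
    rcases hadj with ⟨hc, he⟩ | ⟨hs, he⟩
    · simp only at hc he
      subst he
      cases x with
      | none => exact proper_cyc (by omega) hf0.2 a b hc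
      | some j => exact proper_cyc (by omega) (hg2 j) a b hc
    · simp only at hs he
      subst he
      rw [star_adj_iff] at hs
      obtain ⟨hxy, hn | hn⟩ := hs
      · subst hn
        cases y with
        | none => exact absurd rfl hxy
        | some j =>
          simp only [Option.elim]
          exact (Finset.ne_of_mem_erase (hg1 j a)).symm
      · subst hn
        cases x with
        | none => exact absurd rfl hxy
        | some j =>
          simp only [Option.elim]
          exact Finset.ne_of_mem_erase (hg1 j a)

lemma choosable3 (l s : ℕ) (hl : 1 ≤ l) (hs : s < 2^(2*l+1) - 2) :
    Choosable ((cycGraph (2*l+1)).boxProd (_root_.starGraph s)) 3 := by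
  classical
  haveI : NeZero (2*l+1) := ⟨by omega⟩
  intro L hL
  set F : Finset (Fin (2*l+1) → ℕ) := FnCyc (2*l+1) (fun a => L (a, none)) with hF
  have hFcard : 2^(2*l+1) - 2 ≤ F.card :=
    le_card_FnCyc l hl _ (fun a => hL (a, none))
  set Bad : Fin s → Finset (Fin (2*l+1) → ℕ) := fun j => F.filter (fun f =>
    ¬ ∃ g : Fin (2*l+1) → ℕ,
      (∀ a, g a ∈ (L (a, some j)).erase (f a)) ∧ ∀ a, g (a+1) ≠ g a) with hBad
  have hK2 : ∀ (f : Fin (2*l+1) → ℕ) (j : Fin s) (a : Fin (2*l+1)),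
      2 ≤ ((L (a, some j)).erase (f a)).card := by
    intro f j a
    have h1 := hL (a, some j)
    have h2 := Finset.pred_card_le_card_erase (s := L (a, some j)) (a := f a)
    omega
  -- analysis of a bad center coloring
  have analyze : ∀ (j : Fin s) (f : Fin (2*l+1) → ℕ), f ∈ Bad j →
      (∀ a b, (L (a, some j)).erase (f a) = (L (b, some j)).erase (f b)) ∧
      (∀ a, f a ∉ (L (a, some j)).erase (f a) ∧
        L (a, some j) = insert (f a) ((L (a, some j)).erase (f a))) := by
    intro j f hf
    rw [hBad, Finset.mem_filter] at hf
    obtain ⟨hfF, huncol⟩ := hf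
    have hun : ¬ (FnCyc (2*l+1) (fun a => (L (a, some j)).erase (f a))).Nonempty := by
      rintro ⟨g, hg⟩
      rw [mem_FnCyc] at hg
      exact huncol ⟨g, hg.1, hg.2⟩
    have heq := lists_eq_of_uncolorable (2*l+1) (by omega) _ (hK2 f j) hun
    refine ⟨heq, ?_⟩
    intro a
    have hmem : f a ∈ L (a, some j) := by
      by_contra hnot
      have h3 : ∀ b, 3 ≤ ((L (b, some j)).erase (f b)).card := by
        intro b
        rw [← heq a b, Finset.erase_eq_of_notMem hnot]
        have := hL (a, some j)
        omega
      exact hun (nonempty_FnCyc_of_three (2*l+1) (by omega) _ (fun b => by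
        show 3 ≤ ((L (b, some j)).erase (f b)).card; exact h3 b))
    exact ⟨Finset.notMem_erase _ _, (Finset.insert_erase hmem).symm⟩
  have hBadcard : ∀ j, (Bad j).card ≤ 1 := by
    intro j
    rw [Finset.card_le_one]
    intro f1 h1 f2 h2
    obtain ⟨heq1, hins1⟩ := analyze j f1 h1
    obtain ⟨heq2, hins2⟩ := analyze j f2 h2
    have hf1F : f1 ∈ F := by
      have := h1; rw [hBad, Finset.mem_filter] at this; exact this.1
    have hf2F : f2 ∈ F := by
      have := h2; rw [hBad, Finset.mem_filter] at this; exact this.1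
    have hf1p : ∀ i : Fin (2*l+1), f1 (i+1) ≠ f1 i := by
      have hh := hf1F; rw [hF, mem_FnCyc] at hh; exact hh.2
    have hf2p : ∀ i : Fin (2*l+1), f2 (i+1) ≠ f2 i := by
      have hh := hf2F; rw [hF, mem_FnCyc] at hh; exact hh.2
    have hasym : ∀ (g1 g2 : Fin (2*l+1) → ℕ), (∀ i, g1 (i+1) ≠ g1 i) →
        (∀ a b, (L (a, some j)).erase (g1 a) = (L (b, some j)).erase (g1 b)) →
        (∀ a, g1 a ∉ (L (a, some j)).erase (g1 a) ∧
          L (a, some j) = insert (g1 a) ((L (a, some j)).erase (g1 a))) →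
        (∀ a b, (L (a, some j)).erase (g2 a) = (L (b, some j)).erase (g2 b)) →
        ((L ((0:Fin (2*l+1)), some j)).erase (g2 0)) ⊆
          ((L ((0:Fin (2*l+1)), some j)).erase (g1 0)) := by
      intro g1 g2 hg1p heqa hinsa heqb
      intro t ht
      by_contra htnot
      have hconst : ∀ a, g1 a = t := by
        intro a
        have ht2 : t ∈ (L (a, some j)).erase (g2 a) := by rw [heqb a 0]; exact ht
        have htL : t ∈ L (a, some j) := Finset.mem_of_mem_erase ht2
        rw [(hinsa a).2, Finset.mem_insert] at htL
        rcases htL with h | h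
        · exact h.symm
        · rw [heqa a 0] at h
          exact absurd h htnot
      have := hg1p 0
      rw [hconst (0+1), hconst 0] at this
      exact this rfl
    have hSeq : (L ((0:Fin (2*l+1)), some j)).erase (f1 0)
        = (L ((0:Fin (2*l+1)), some j)).erase (f2 0) := by
      apply Finset.Subset.antisymm
      · exact hasym f2 f1 hf2p heq2 hins2 heq1
      · exact hasym f1 f2 hf1p heq1 hins1 heq2
    funext a
    have h1a : f1 a ∈ L (a, some j) := by
      rw [(hins1 a).2]; exact Finset.mem_insert_self _ _
    rw [(hins2 a).2, Finset.mem_insert] at h1a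
    rcases h1a with h | h
    · exact h
    · exfalso
      rw [heq2 a 0, ← hSeq, heq1 0 a] at h
      exact (hins1 a).1 h
  -- pick a good center coloring
  have hcover : (Finset.univ.biUnion Bad).card ≤ s := by
    calc (Finset.univ.biUnion Bad).card ≤ ∑ j : Fin s, (Bad j).card :=
        Finset.card_biUnion_le
      _ ≤ ∑ _j : Fin s, 1 := Finset.sum_le_sum (fun j _ => hBadcard j)
      _ = s := by simp
  have hgood : (F \ Finset.univ.biUnion Bad).Nonempty := by
    rw [← Finset.card_pos]
    have := Finset.le_card_sdiff (Finset.univ.biUnion Bad) F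
    have hpow : 8 ≤ 2^(2*l+1) := by
      calc (8:ℕ) = 2^3 := by norm_num
      _ ≤ 2^(2*l+1) := Nat.pow_le_pow_right (by norm_num) (by omega)
    omega
  obtain ⟨f, hfmem⟩ := hgood
  rw [Finset.mem_sdiff] at hfmem
  obtain ⟨hfF, hfnot⟩ := hfmem
  have hfprops : (∀ a, f a ∈ L (a, none)) ∧ ∀ i : Fin (2*l+1), f (i+1) ≠ f i := by
    have hh := hfF; rw [hF, mem_FnCyc] at hh; exact hh
  have hleaf : ∀ j : Fin s, ∃ g : Fin (2*l+1) → ℕ,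
      (∀ a, g a ∈ (L (a, some j)).erase (f a)) ∧ ∀ a, g (a+1) ≠ g a := by
    intro j
    have : f ∉ Bad j := fun hbad => hfnot (Finset.mem_biUnion.2 ⟨j, Finset.mem_univ j, hbad⟩)
    rw [hBad, Finset.mem_filter] at this
    push_neg at this
    exact this hfF
  choose g hg1 hg2 using hleaf
  refine ⟨fun p => Option.elim p.2 (f p.1) (fun j => g j p.1), ?_, ?_⟩
  · rintro ⟨a, x⟩
    cases x with
    | none => exact hfprops.1 a
    | some j => exact Finset.mem_of_mem_erase (hg1 j a)
  · rintro ⟨a, x⟩ ⟨b, y⟩ hadj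
    rw [SimpleGraph.boxProd_adj] at hadj
    rcases hadj with ⟨hc, he⟩ | ⟨hst, he⟩
    · simp only at hc he
      subst he
      cases x with
      | none => exact proper_cyc (by omega) hfprops.2 a b hc
      | some j => exact proper_cyc (by omega) (hg2 j) a b hc
    · simp only at hst he
      subst he
      rw [star_adj_iff] at hst
      obtain ⟨hxy, hn | hn⟩ := hst
      · subst hn
        cases y with
        | none => exact absurd rfl hxy
        | some j =>
          simp only [Option.elim]
          exact (Finset.ne_of_mem_erase (hg1 j a)).symm
      · subst hn
        cases x with
        | none => exact absurd rfl hxy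
        | some j =>
          simp only [Option.elim]
          exact Finset.ne_of_mem_erase (hg1 j a)

lemma notChoosable3 (l s : ℕ) (hl : 1 ≤ l) (hs : 2^(2*l+1) - 2 ≤ s) :
    ¬ Choosable ((cycGraph (2*l+1)).boxProd (_root_.starGraph s)) 3 := by
  classical
  haveI : NeZero (2*l+1) := ⟨by omega⟩
  intro hch
  have hFc : (FnCyc (2*l+1) (fun _ => Finset.range 3)).card = 2^(2*l+1) - 2 :=
    card_FnCyc_const l hl (Finset.range 3) (by simp)
  set Fc := FnCyc (2*l+1) (fun _ : Fin (2*l+1) => Finset.range 3) with hFcdef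
  have hpow : 8 ≤ 2^(2*l+1) := by
    calc (8:ℕ) = 2^3 := by norm_num
    _ ≤ 2^(2*l+1) := Nat.pow_le_pow_right (by norm_num) (by omega)
  haveI hne : Nonempty {x // x ∈ Fc} := by
    obtain ⟨x, hx⟩ := Finset.card_pos.1 (by omega : 0 < Fc.card)
    exact ⟨⟨x, hx⟩⟩
  have hcle : Fc.card ≤ s := by omega
  let e := Fc.equivFin
  let φ : {x // x ∈ Fc} → Fin s := fun x => Fin.castLE hcle (e x)
  have hφinj : Function.Injective φ := by
    intro x y h
    have h2 := congrArg Fin.val h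
    exact e.injective (Fin.ext h2)
  let ψ : Fin s → {x // x ∈ Fc} := Function.invFun φ
  have hψφ : ∀ x, ψ (φ x) = x := Function.leftInverse_invFun hφinj
  set L : (Fin (2*l+1) × Option (Fin s)) → Finset ℕ := fun p =>
    Option.elim p.2 (Finset.range 3) (fun j => insert ((ψ j).1 p.1) {3, 4}) with hLdef
  have hLnone : ∀ a, L (a, none) = Finset.range 3 := by
    intro a; rw [hLdef]; rfl
  have hLsome : ∀ a j, L (a, some j) = insert ((ψ j).1 a) {3, 4} := by
    intro a j; rw [hLdef]; rfl
  have hmemrange : ∀ (x : {x // x ∈ Fc}) a, x.1 a ∈ Finset.range 3 := by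
    rintro ⟨g, hg⟩ a
    rw [hFcdef, mem_FnCyc] at hg
    exact hg.1 a
  have hLcard : ∀ v, 3 ≤ (L v).card := by
    rintro ⟨a, x⟩
    cases x with
    | none => rw [hLnone]; simp
    | some j =>
      rw [hLsome]
      have hv := hmemrange (ψ j) a
      rw [Finset.mem_range] at hv
      rw [Finset.card_insert_of_notMem (by simp; omega)]
      simp
  obtain ⟨f, hf1, hf2⟩ := hch L hLcard
  have h0mem : (fun a => f (a, none)) ∈ Fc := by
    rw [hFcdef, mem_FnCyc]
    constructor
    · intro a
      have := hf1 (a, none)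
      rwa [hLnone] at this
    · intro i
      exact hf2 _ _ (SimpleGraph.boxProd_adj.mpr
        (Or.inl ⟨(cyc_adj (by omega) i).symm, rfl⟩))
  set x0 : {x // x ∈ Fc} := ⟨_, h0mem⟩ with hx0
  have hval : ∀ a, f (a, some (φ x0)) = 3 ∨ f (a, some (φ x0)) = 4 := by
    intro a
    have hmem := hf1 (a, some (φ x0))
    rw [hLsome, hψφ] at hmem
    have hx0a : (x0).1 a = f (a, none) := by rw [hx0]
    rw [hx0a, Finset.mem_insert] at hmem
    have hne2 : f (a, some (φ x0)) ≠ f (a, none) :=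
      hf2 _ _ (SimpleGraph.boxProd_adj.mpr
        (Or.inr ⟨(star_adj (φ x0)).symm, rfl⟩))
    rcases hmem with h | h
    · exact absurd h hne2
    · simpa using h
  refine no_two_coloring (n := 2*l+1) (by omega) (by omega)
    (fun a => f (a, some (φ x0))) ?_ 3 4 hval
  intro i
  exact hf2 _ _ (SimpleGraph.boxProd_adj.mpr
    (Or.inl ⟨(cyc_adj (by omega) i).symm, rfl⟩))

end Stmt15

/-- `χ_ℓ(C_{2l+1} □ K_{1,s})` transitions from 3 to 4 at `s = 2^{2l+1} - 2`. -/
theorem stmt_15 (l s : ℕ) (hl : 1 ≤ l) :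
    (s < 2 ^ (2 * l + 1) - 2 →
      listChromaticNumber ((cycGraph (2 * l + 1)).boxProd (_root_.starGraph s)) = 3) ∧
    (2 ^ (2 * l + 1) - 2 ≤ s →
      listChromaticNumber ((cycGraph (2 * l + 1)).boxProd (_root_.starGraph s)) = 4) := by
  constructor
  · intro hs
    exact Stmt15.listChrom_eq _ 3 (by norm_num) (Stmt15.choosable3 l s hl hs)
      (Stmt15.notChoosable2 l s hl)
  · intro hs
    exact Stmt15.listChrom_eq _ 4 (by norm_num) (Stmt15.choosable4 l s hl)
      (Stmt15.notChoosable3 l s hl hs)
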